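/- Let Ω ⊊ ℂ be a domain. Then there exists a holomorphic function f on Ω, not identically zero, such that f admits no holomorphic extension to any strictly larger open set: for every connected open set U ⊆ ℂ with Ω ⊆ U and U ≠ Ω, there is no holomorphic function g on U with g = f on Ω. -/

import Mathlib

open Filter Topology Metric Finset

lemma norm_prod_one_add_le (v : ℕ → ℂ) (s : Finset ℕ) :
    ‖∏ i ∈ s, (1 + v i)‖ ≤ Real.exp (∑ i ∈ s, ‖v i‖) := by
  rw [norm_prod]
  calc ∏ i ∈ s, ‖1 + v i‖ ≤ ∏ i ∈ s, Real.exp ‖v i‖ := by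
        apply Finset.prod_le_prod (fun i _ => norm_nonneg _)
        intro i _
        calc ‖1 + v i‖ ≤ ‖(1:ℂ)‖ + ‖v i‖ := norm_add_le _ _
          _ = 1 + ‖v i‖ := by simp
          _ ≤ Real.exp ‖v i‖ := by
              have := Real.add_one_le_exp ‖v i‖; linarith
    _ = Real.exp (∑ i ∈ s, ‖v i‖) := (Real.exp_sum s _).symm

lemma norm_prod_one_add_sub_one_le (v : ℕ → ℂ) (s : Finset ℕ) :
    ‖(∏ i ∈ s, (1 + v i)) - 1‖ ≤ Real.exp (∑ i ∈ s, ‖v i‖) - 1 := by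
  induction s using Finset.cons_induction with
  | empty => simp
  | cons a s ha ih =>
    rw [Finset.prod_cons, Finset.sum_cons]
    have hP := norm_prod_one_add_le v s
    calc ‖(1 + v a) * ∏ i ∈ s, (1 + v i) - 1‖
        = ‖((∏ i ∈ s, (1 + v i)) - 1) + v a * ∏ i ∈ s, (1 + v i)‖ := by ring_nf
      _ ≤ ‖(∏ i ∈ s, (1 + v i)) - 1‖ + ‖v a‖ * ‖∏ i ∈ s, (1 + v i)‖ := by
          refine (norm_add_le _ _).trans ?_; rw [norm_mul]
      _ ≤ (Real.exp (∑ i ∈ s, ‖v i‖) - 1) + ‖v a‖ * Real.exp (∑ i ∈ s, ‖v i‖) := by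
          exact add_le_add ih (mul_le_mul_of_nonneg_left hP (norm_nonneg _))
      _ = (1 + ‖v a‖) * Real.exp (∑ i ∈ s, ‖v i‖) - 1 := by ring
      _ ≤ Real.exp ‖v a‖ * Real.exp (∑ i ∈ s, ‖v i‖) - 1 := by
          gcongr
          have := Real.add_one_le_exp ‖v a‖
          linarith
      _ = Real.exp (‖v a‖ + ∑ i ∈ s, ‖v i‖) - 1 := by rw [Real.exp_add]

lemma product_construction (S : Set ℂ) (hS : IsClosed S) (hSne : S.Nonempty)
    (a : ℕ → ℂ) (ha : ∀ n, a n ∈ S)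
    (c : ℕ → ℂ) (hc : ∀ n, ‖c n‖ ≤ (1/2)^n) (hc0 : ∀ n, c n ≠ 0) :
    ∃ f : ℂ → ℂ,
      DifferentiableOn ℂ f Sᶜ ∧
      (∀ n, a n - c n ∉ S → f (a n - c n) = 0) ∧
      (∀ z₀ ∉ S, ∃ w ∈ Metric.ball z₀ (Metric.infDist z₀ S), f w ≠ 0) := by
  classical
  set u : ℕ → ℂ → ℂ := fun n z => c n / (z - a n) with hu
  set F : ℕ → ℂ → ℂ := fun s z => ∏ i ∈ Finset.range s, (1 + u i z) with hF
  set b : ℝ → ℕ → ℝ := fun r N => Real.exp (2/r) * (Real.exp ((1/2)^N * (2/r)) - 1) with hb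
  -- distance from points to poles
  have hdistS : ∀ (z : ℂ) (n : ℕ), infDist z S ≤ ‖z - a n‖ := by
    intro z n
    rw [← dist_eq_norm]
    exact infDist_le_dist_of_mem (ha n)
  have hnotS : ∀ z : ℂ, 0 < infDist z S → z ∉ S := by
    intro z hz hmem
    simp [infDist_zero_of_mem hmem] at hz
  have hu_bound : ∀ r : ℝ, 0 < r → ∀ z : ℂ, r ≤ infDist z S → ∀ n, ‖u n z‖ ≤ (1/2)^n / r := by
    intro r hr z hz n
    have h1 : r ≤ ‖z - a n‖ := hz.trans (hdistS z n)
    rw [hu]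
    simp only [norm_div]
    exact div_le_div₀ (by positivity) (hc n) hr h1
  have htailgeo : ∀ N t : ℕ, ∑ i ∈ Finset.Ico N t, ((1:ℝ)/2)^i ≤ (1/2)^N * 2 := by
    intro N t
    rcases le_or_gt N t with h | h
    · rw [Finset.sum_Ico_eq_sum_range]
      calc ∑ i ∈ Finset.range (t - N), ((1:ℝ)/2)^(N + i)
          = (1/2)^N * ∑ i ∈ Finset.range (t - N), ((1:ℝ)/2)^i := by
            rw [Finset.mul_sum]
            exact Finset.sum_congr rfl fun i _ => pow_add _ _ _
        _ ≤ (1/2)^N * 2 := by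
            have := sum_geometric_two_le (t - N)
            have h0 : (0:ℝ) ≤ (1/2)^N := by positivity
            nlinarith
    · rw [Finset.Ico_eq_empty (by omega)]
      simp only [Finset.sum_empty]
      positivity
  have hsum_Ico : ∀ r : ℝ, 0 < r → ∀ z : ℂ, r ≤ infDist z S → ∀ N t : ℕ,
      ∑ i ∈ Finset.Ico N t, ‖u i z‖ ≤ (1/2)^N * (2/r) := by
    intro r hr z hz N t
    calc ∑ i ∈ Finset.Ico N t, ‖u i z‖ ≤ ∑ i ∈ Finset.Ico N t, ((1:ℝ)/2)^i / r := by
          exact Finset.sum_le_sum fun i _ => hu_bound r hr z hz i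
      _ = (∑ i ∈ Finset.Ico N t, ((1:ℝ)/2)^i) / r := by rw [Finset.sum_div]
      _ ≤ ((1/2)^N * 2) / r := by
          gcongr
          exact htailgeo N t
      _ = (1/2)^N * (2/r) := by ring
  have hsum_range : ∀ r : ℝ, 0 < r → ∀ z : ℂ, r ≤ infDist z S → ∀ s : ℕ,
      ∑ i ∈ Finset.range s, ‖u i z‖ ≤ 2/r := by
    intro r hr z hz s
    have := hsum_Ico r hr z hz 0 s
    rw [Finset.range_eq_Ico]
    simpa using this
  -- key Cauchy estimate
  have hkey : ∀ r : ℝ, 0 < r → ∀ z : ℂ, r ≤ infDist z S → ∀ N s t : ℕ, N ≤ s → s ≤ t →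
      dist (F s z) (F t z) ≤ b r N := by
    intro r hr z hz N s t hNs hst
    have hsplit : F t z = F s z * ∏ i ∈ Finset.Ico s t, (1 + u i z) := by
      rw [hF]
      exact (Finset.prod_range_mul_prod_Ico _ hst).symm
    rw [dist_eq_norm, hsplit]
    have heq : F s z - F s z * ∏ i ∈ Finset.Ico s t, (1 + u i z)
        = -(F s z * ((∏ i ∈ Finset.Ico s t, (1 + u i z)) - 1)) := by ring
    rw [heq, norm_neg, norm_mul]
    have h1 : ‖F s z‖ ≤ Real.exp (2/r) := by
      refine (norm_prod_one_add_le _ _).trans ?_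
      exact Real.exp_le_exp.2 (hsum_range r hr z hz s)
    have h2 : ‖(∏ i ∈ Finset.Ico s t, (1 + u i z)) - 1‖ ≤ Real.exp ((1/2)^N * (2/r)) - 1 := by
      refine (_root_.norm_prod_one_add_sub_one_le _ _).trans ?_
      have h3 : ∑ i ∈ Finset.Ico s t, ‖u i z‖ ≤ (1/2)^N * (2/r) := by
        refine (hsum_Ico r hr z hz s t).trans ?_
        have : ((1:ℝ)/2)^s ≤ (1/2)^N := by
          apply pow_le_pow_of_le_one (by norm_num) (by norm_num) hNs
        have h4 : (0:ℝ) < 2/r := by positivity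
        nlinarith
      have := Real.exp_le_exp.2 h3
      linarith
    calc ‖F s z‖ * ‖(∏ i ∈ Finset.Ico s t, (1 + u i z)) - 1‖
        ≤ Real.exp (2/r) * (Real.exp ((1/2)^N * (2/r)) - 1) := by
          apply mul_le_mul h1 h2 (norm_nonneg _) (Real.exp_nonneg _)
      _ = b r N := rfl
  -- b tends to zero
  have hb0 : ∀ r : ℝ, 0 < r → Tendsto (b r) atTop (𝓝 0) := by
    intro r hr
    have h1 : Tendsto (fun N : ℕ => ((1:ℝ)/2)^N) atTop (𝓝 0) :=
      tendsto_pow_atTop_nhds_zero_of_lt_one (by norm_num) (by norm_num)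
    have h2 : Tendsto (fun N : ℕ => Real.exp ((1/2)^N * (2/r)) - 1) atTop (𝓝 0) := by
      have h1' : Tendsto (fun N : ℕ => ((1:ℝ)/2)^N * (2/r)) atTop (𝓝 0) := by
        simpa using h1.mul_const (2/r)
      have h3 := (Real.continuous_exp.tendsto 0).comp h1'
      simp only [Function.comp_def] at h3
      have h4 := h3.sub_const 1
      simpa using h4
    have := h2.const_mul (Real.exp (2/r))
    simpa [hb] using this
  -- pointwise convergence
  have hconv0 : ∀ z ∉ S, ∃ L, Tendsto (fun s => F s z) atTop (𝓝 L) := by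
    intro z hz
    have hr : 0 < infDist z S := (hS.notMem_iff_infDist_pos hSne).1 hz
    have hcauchy : CauchySeq (fun s => F s z) := by
      apply cauchySeq_of_le_tendsto_0 (b := b (infDist z S)) _ (hb0 _ hr)
      intro n m N hn hm
      rcases le_total n m with h | h
      · exact hkey _ hr z le_rfl N n m hn h
      · rw [dist_comm]; exact hkey _ hr z le_rfl N m n hm h
    exact cauchySeq_tendsto_of_complete hcauchy
  set f : ℂ → ℂ := fun z => limUnder atTop (fun s => F s z) with hfdef
  have hconv : ∀ z ∉ S, Tendsto (fun s => F s z) atTop (𝓝 (f z)) := by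
    intro z hz
    obtain ⟨L, hL⟩ := hconv0 z hz
    have : f z = L := hL.limUnder_eq
    rw [this]; exact hL
  -- ball facts
  have hball : ∀ z₀ ∉ S, ∀ z ∈ ball z₀ (infDist z₀ S / 2), infDist z₀ S / 2 ≤ infDist z S := by
    intro z₀ h z hz
    have h1 : infDist z₀ S ≤ infDist z S + dist z₀ z := infDist_le_infDist_add_dist
    have hd : dist z₀ z < infDist z₀ S / 2 := by rw [dist_comm]; exact mem_ball.1 hz
    linarith
  -- uniform convergence on balls
  have hUnif : ∀ z₀ ∉ S, TendstoUniformlyOn F f atTop (ball z₀ (infDist z₀ S / 2)) := by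
    intro z₀ hz₀
    have hδ : 0 < infDist z₀ S := (hS.notMem_iff_infDist_pos hSne).1 hz₀
    have hr : 0 < infDist z₀ S / 2 := by positivity
    rw [Metric.tendstoUniformlyOn_iff]
    intro ε hε
    filter_upwards [(hb0 _ hr).eventually (gt_mem_nhds hε)] with s hs z hz
    have hzr : infDist z₀ S / 2 ≤ infDist z S := hball z₀ hz₀ z hz
    have hzS : z ∉ S := hnotS z (lt_of_lt_of_le hr hzr)
    have hlim : Tendsto (fun t => dist (F s z) (F t z)) atTop (𝓝 (dist (F s z) (f z))) :=
      tendsto_const_nhds.dist (hconv z hzS)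
    have hle : dist (F s z) (f z) ≤ b (infDist z₀ S / 2) s := by
      apply le_of_tendsto hlim
      filter_upwards [eventually_ge_atTop s] with t ht
      exact hkey _ hr z hzr s s t le_rfl ht
    rw [dist_comm]
    exact lt_of_le_of_lt hle hs
  -- differentiability of partial products
  have hFdiff : ∀ z₀ ∉ S, ∀ s : ℕ, DifferentiableOn ℂ (F s) (ball z₀ (infDist z₀ S / 2)) := by
    intro z₀ hz₀ s
    have hδ : 0 < infDist z₀ S := (hS.notMem_iff_infDist_pos hSne).1 hz₀
    have hr : 0 < infDist z₀ S / 2 := by positivity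
    rw [hF]
    apply DifferentiableOn.fun_finsetProd
    intro i _
    apply (differentiableOn_const _).add
    apply (differentiableOn_const _).div
    · exact differentiableOn_id.sub (differentiableOn_const _)
    · intro z hz
      have hzr : infDist z₀ S / 2 ≤ infDist z S := hball z₀ hz₀ z hz
      have : (0:ℝ) < ‖z - a i‖ := lt_of_lt_of_le (lt_of_lt_of_le hr hzr) (hdistS z i)
      intro hzero
      rw [hzero] at this
      simp at this
  -- differentiability of f
  have hfdiff : DifferentiableOn ℂ f Sᶜ := by
    intro z hz
    have hz' : z ∉ S := hz
    have hδ : 0 < infDist z S := (hS.notMem_iff_infDist_pos hSne).1 hz'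
    have hd : DifferentiableOn ℂ f (ball z (infDist z S / 2)) :=
      ((hUnif z hz').tendstoLocallyUniformlyOn).differentiableOn
        (Eventually.of_forall (hFdiff z hz')) isOpen_ball
    exact (hd.differentiableAt (isOpen_ball.mem_nhds (mem_ball_self (by positivity)))).differentiableWithinAt
  refine ⟨f, hfdiff, ?_, ?_⟩
  · -- zeros
    intro n hn
    have h1 : ∀ s, n < s → F s (a n - c n) = 0 := by
      intro s hs
      rw [hF]
      apply Finset.prod_eq_zero (Finset.mem_range.2 hs)
      rw [hu]
      simp only
      rw [show a n - c n - a n = -(c n) by ring, div_neg, div_self (hc0 n)]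
      ring
    have h2 : Tendsto (fun s => F s (a n - c n)) atTop (𝓝 0) := by
      apply Tendsto.congr' _ tendsto_const_nhds
      filter_upwards [eventually_gt_atTop n] with s hs
      exact (h1 s hs).symm
    exact tendsto_nhds_unique (hconv _ hn) h2
  · -- nonvanishing near any point
    intro z₀ hz₀
    have hδ : 0 < infDist z₀ S := (hS.notMem_iff_infDist_pos hSne).1 hz₀
    set r : ℝ := infDist z₀ S / 2 with hrdef
    have hr : 0 < r := by positivity
    -- choose N with small tail
    obtain ⟨N, hN⟩ : ∃ N : ℕ, ((1:ℝ)/2)^N * (2/r) ≤ 1/2 := by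
      have h1 : Tendsto (fun N : ℕ => ((1:ℝ)/2)^N * (2/r)) atTop (𝓝 0) := by
        simpa using
          (tendsto_pow_atTop_nhds_zero_of_lt_one (by norm_num : (0:ℝ) ≤ 1/2)
            (by norm_num : (1:ℝ)/2 < 1)).mul_const (2/r)
      obtain ⟨N, hN⟩ := (h1.eventually (gt_mem_nhds (by norm_num : (0:ℝ) < 1/2))).exists
      exact ⟨N, le_of_lt hN⟩
    -- choose w in the small ball avoiding finitely many points
    obtain ⟨w, hwT, hwbad⟩ :
        ∃ w, w ∈ (fun t : ℝ => z₀ + (t:ℂ)) '' Set.Ioo 0 r ∧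
          w ∉ (fun i => a i - c i) '' (Set.Iio N) := by
      have hinj : Set.InjOn (fun t : ℝ => z₀ + (t:ℂ)) (Set.Ioo 0 r) := by
        intro x _ y _ h
        simpa using h
      have hinf : ((fun t : ℝ => z₀ + (t:ℂ)) '' Set.Ioo 0 r).Infinite :=
        (Set.Ioo_infinite hr).image hinj
      have hfin : ((fun i => a i - c i) '' (Set.Iio N)).Finite :=
        (Set.finite_Iio N).image _
      obtain ⟨w, hw⟩ := (hinf.diff hfin).nonempty
      exact ⟨w, hw.1, hw.2⟩
    obtain ⟨t, ht, rfl⟩ := hwT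
    set w : ℂ := z₀ + (t:ℂ) with hwdef
    have hdist : dist w z₀ < r := by
      have habs : dist w z₀ = |t| := by
        rw [hwdef, dist_eq_norm, show z₀ + (t:ℂ) - z₀ = (t:ℂ) by ring]
        simp [Real.norm_eq_abs]
      rw [habs, abs_of_pos ht.1]
      exact ht.2
    have hwball : w ∈ ball z₀ (infDist z₀ S) := by
      rw [mem_ball]
      calc dist w z₀ < r := hdist
        _ ≤ infDist z₀ S := by rw [hrdef]; linarith
    have hwS : w ∉ S := by
      intro hmem
      have := infDist_le_dist_of_mem hmem (x := z₀)
      rw [dist_comm] at this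
      have := mem_ball.1 hwball
      linarith [infDist_le_dist_of_mem hmem (x := z₀)]
    have hwr : r ≤ infDist w S := by
      apply hball z₀ hz₀
      rw [mem_ball]
      exact hdist
    -- partial product at w is nonzero
    have hFN : F N w ≠ 0 := by
      rw [hF]
      apply Finset.prod_ne_zero_iff.2
      intro i hi
      have hwa : w - a i ≠ 0 := by
        apply sub_ne_zero.2
        intro heq
        exact hwS (heq ▸ ha i)
      intro h0
      apply hwbad
      refine ⟨i, Finset.mem_range.1 hi, ?_⟩
      rw [hu] at h0
      simp only at h0
      field_simp at h0
      linear_combination -h0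
    -- the tail product converges to f w / F N w
    have hPtend : Tendsto (fun s => ∏ i ∈ Finset.Ico N s, (1 + u i w)) atTop
        (𝓝 (f w / F N w)) := by
      have h1 : Tendsto (fun s => F s w / F N w) atTop (𝓝 (f w / F N w)) :=
        (hconv w hwS).div_const (F N w)
      apply h1.congr'
      filter_upwards [eventually_ge_atTop N] with s hs
      rw [div_eq_iff hFN, mul_comm]
      exact (Finset.prod_range_mul_prod_Ico _ hs).symm
    have hPbound : ∀ s : ℕ, ‖(∏ i ∈ Finset.Ico N s, (1 + u i w)) - 1‖ ≤ Real.exp (1/2) - 1 := by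
      intro s
      refine (_root_.norm_prod_one_add_sub_one_le _ _).trans ?_
      have h3 : ∑ i ∈ Finset.Ico N s, ‖u i w‖ ≤ 1/2 :=
        (hsum_Ico r hr w hwr N s).trans hN
      have := Real.exp_le_exp.2 h3
      linarith
    have hT1 : ‖f w / F N w - 1‖ ≤ Real.exp (1/2) - 1 := by
      have hlim : Tendsto (fun s => ‖(∏ i ∈ Finset.Ico N s, (1 + u i w)) - 1‖) atTop
          (𝓝 ‖f w / F N w - 1‖) := ((hPtend.sub_const 1).norm)
      exact le_of_tendsto hlim (Eventually.of_forall hPbound)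
    have hexp : Real.exp (1/2) < 2 := by
      have h2 : (1:ℝ)/2 < Real.log 2 := by
        have := Real.log_two_gt_d9; linarith
      calc Real.exp (1/2) < Real.exp (Real.log 2) := Real.exp_lt_exp.2 h2
        _ = 2 := Real.exp_log (by norm_num)
    have hfw : f w ≠ 0 := by
      intro h0
      rw [h0] at hT1
      simp at hT1
      linarith
    exact ⟨w, hwball, hfw⟩

set_option maxHeartbeats 1000000 in
/-- **Every planar domain is a domain of holomorphy.** Let `Ω ⊊ ℂ` be a domain. Then
there is a holomorphic function `f` on `Ω`, not identically zero, admitting no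
holomorphic extension to any strictly larger connected open set `U ⊇ Ω`. -/
theorem planar_domain_of_holomorphy (Ω : Set ℂ)
    (hΩopen : IsOpen Ω) (hΩconn : IsConnected Ω) (hΩne : Ω ≠ Set.univ) :
    ∃ f : ℂ → ℂ, DifferentiableOn ℂ f Ω ∧ ¬ Set.EqOn f 0 Ω ∧
      ∀ U : Set ℂ, IsOpen U → IsConnected U → Ω ⊆ U → U ≠ Ω →
        ¬ ∃ g : ℂ → ℂ, DifferentiableOn ℂ g U ∧ Set.EqOn g f Ω := by
  classical
  obtain ⟨z_ex, hz_ex⟩ := hΩconn.nonempty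
  have hfr : (frontier Ω).Nonempty := by
    rw [nonempty_frontier_iff]
    exact ⟨hΩconn.nonempty, hΩne⟩
  have hfr_sub : frontier Ω ⊆ Ωᶜ := by
    rw [hΩopen.frontier_eq]
    intro x hx
    exact hx.2
  have hne : Nonempty ↥(frontier Ω) := hfr.to_subtype
  obtain ⟨aa, haa⟩ := TopologicalSpace.exists_dense_seq ↥(frontier Ω)
  set e : ℕ ≃ ℕ × ℕ := (Denumerable.eqv (ℕ × ℕ)).symm with hedef
  set a : ℕ → ℂ := fun n => (aa (e n).1 : ℂ) with hadef
  have ha_mem : ∀ n, a n ∈ Ωᶜ := fun n => hfr_sub (aa (e n).1).2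
  have ha_cl : ∀ n, (a n : ℂ) ∈ closure Ω := fun n => frontier_subset_closure (aa (e n).1).2
  have hchoice : ∀ n : ℕ, ∃ q ∈ Ω, dist (a n) q < min ((1/2:ℝ)^n) (1/(((e n).2 : ℝ) + 1)) := by
    intro n
    have hpos : 0 < min ((1/2:ℝ)^n) (1/(((e n).2 : ℝ) + 1)) := by positivity
    exact Metric.mem_closure_iff.1 (ha_cl n) _ hpos
  choose p hpΩ hpdist using hchoice
  set c : ℕ → ℂ := fun n => a n - p n with hcdef
  have hc_norm : ∀ n, ‖c n‖ ≤ (1/2)^n := by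
    intro n
    have h1 := hpdist n
    rw [dist_eq_norm] at h1
    exact le_of_lt (lt_of_lt_of_le h1 (min_le_left _ _))
  have hc0 : ∀ n, c n ≠ 0 := by
    intro n
    rw [hcdef]
    simp only [ne_eq, sub_eq_zero]
    intro heq
    exact (ha_mem n) (heq ▸ hpΩ n)
  have hScl : IsClosed (Ωᶜ : Set ℂ) := hΩopen.isClosed_compl
  have hSne : (Ωᶜ : Set ℂ).Nonempty := Set.nonempty_compl.2 hΩne
  obtain ⟨f, hfdiff, hfzero, hfnon⟩ := product_construction Ωᶜ hScl hSne a ha_mem c hc_norm hc0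
  rw [compl_compl] at hfdiff
  have hpz : ∀ n, f (p n) = 0 := by
    intro n
    have h1 : a n - c n = p n := by rw [hcdef]; ring
    have h2 : (a n - c n) ∉ (Ωᶜ : Set ℂ) := by
      rw [h1]
      exact Set.notMem_compl_iff.2 (hpΩ n)
    have := hfzero n h2
    rwa [h1] at this
  have hz_exS : z_ex ∉ (Ωᶜ : Set ℂ) := Set.notMem_compl_iff.2 hz_ex
  obtain ⟨w, hwball, hwne⟩ := hfnon z_ex hz_exS
  have hwΩ : w ∈ Ω := by
    by_contra hw
    have h1 : infDist z_ex (Ωᶜ : Set ℂ) ≤ dist z_ex w := infDist_le_dist_of_mem hw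
    rw [mem_ball] at hwball
    rw [dist_comm] at h1
    linarith
  have hnotzero : ¬ Set.EqOn f 0 Ω := fun h => hwne (h hwΩ)
  refine ⟨f, hfdiff, hnotzero, ?_⟩
  rintro U hUopen hUconn hΩU hUne ⟨g, hgdiff, hgf⟩
  have hUfr : (U ∩ frontier Ω).Nonempty := by
    by_contra hemp
    rw [Set.not_nonempty_iff_eq_empty] at hemp
    have hsub : U ⊆ Ω ∪ (closure Ω)ᶜ := by
      intro x hx
      by_cases hxΩ : x ∈ Ω
      · exact Or.inl hxΩ
      · refine Or.inr fun hxcl => ?_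
        have hxfr : x ∈ frontier Ω := by
          rw [hΩopen.frontier_eq]
          exact ⟨hxcl, hxΩ⟩
        exact Set.eq_empty_iff_forall_notMem.1 hemp x ⟨hx, hxfr⟩
    have hdisj : Disjoint Ω (closure Ω)ᶜ :=
      (disjoint_compl_right : Disjoint (closure Ω) (closure Ω)ᶜ).mono_left subset_closure
    have hUsub : U ⊆ Ω :=
      (hUconn.isPreconnected).subset_left_of_subset_union hΩopen
        isClosed_closure.isOpen_compl hdisj hsub ⟨z_ex, hΩU hz_ex, hz_ex⟩
    exact hUne (Set.Subset.antisymm hUsub hΩU)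
  obtain ⟨z₁, hz₁U, hz₁fr⟩ := hUfr
  obtain ⟨ε, hε, hballU⟩ := Metric.isOpen_iff.1 hUopen z₁ hz₁U
  have hVopen : IsOpen {x : ↥(frontier Ω) | (x : ℂ) ∈ Metric.ball z₁ ε} :=
    isOpen_ball.preimage continuous_subtype_val
  have hVne : {x : ↥(frontier Ω) | (x : ℂ) ∈ Metric.ball z₁ ε}.Nonempty := by
    refine ⟨⟨z₁, hz₁fr⟩, ?_⟩
    show (z₁ : ℂ) ∈ Metric.ball z₁ ε
    exact mem_ball_self hε
  obtain ⟨m, hm⟩ := haa.exists_mem_open hVopen hVne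
  set q : ℂ := (aa m : ℂ) with hqdef
  have hqU : q ∈ U := hballU hm
  have hqΩc : q ∉ Ω := hfr_sub (aa m).2
  set seq : ℕ → ℂ := fun k => p (e.symm (m, k)) with hseqdef
  have hseq_a : ∀ k : ℕ, a (e.symm (m, k)) = q := by
    intro k
    rw [hadef]
    simp [e.apply_symm_apply, hqdef]
  have hseq_dist : ∀ k : ℕ, dist (seq k) q ≤ 1/(k+1) := by
    intro k
    have h1 := hpdist (e.symm (m, k))
    rw [hseq_a k] at h1
    have h2 : ((e (e.symm (m, k))).2 : ℝ) = (k : ℝ) := by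
      rw [e.apply_symm_apply]
    rw [h2] at h1
    rw [dist_comm]
    exact le_of_lt (lt_of_lt_of_le h1 (min_le_right _ _))
  have hseq_tend : Tendsto seq atTop (𝓝 q) := by
    rw [tendsto_iff_dist_tendsto_zero]
    apply squeeze_zero (fun k => dist_nonneg) hseq_dist
    exact tendsto_one_div_add_atTop_nhds_zero_nat
  have hseq_ne : ∀ k, seq k ≠ q := fun k heq => hqΩc (heq ▸ hpΩ _)
  have hseq_tend' : Tendsto seq atTop (𝓝[≠] q) :=
    tendsto_nhdsWithin_of_tendsto_nhds_of_eventually_within _ hseq_tend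
      (Eventually.of_forall fun k => hseq_ne k)
  have hfreq : ∃ᶠ z in 𝓝[≠] q, g z = 0 := by
    apply hseq_tend'.frequently
    apply Filter.Frequently.of_forall
    intro k
    exact (hgf (hpΩ _)).trans (hpz _)
  have hgan : AnalyticOnNhd ℂ g U := hgdiff.analyticOnNhd hUopen
  have hg0 : Set.EqOn g 0 U :=
    hgan.eqOn_zero_of_preconnected_of_frequently_eq_zero hUconn.isPreconnected hqU hfreq
  apply hwne
  have h1 : g w = f w := hgf hwΩ
  have h2 : g w = 0 := hg0 (hΩU hwΩ)
  rw [← h1, h2]
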